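/- (Theorem 1.) Let M ∈ ℝ^{l×l} be nonsingular and f ∈ ℝ^l. Suppose Q̃, R̃ ∈ ℝ^{l×l} satisfy ‖M − Q̃R̃‖₂ ≤ α‖M‖₂ with α·κ(M) < 1, and ‖I − Q̃ᵀQ̃‖₂ ≤ β < 1. Suppose moreover there exist ΔR, ΔQ ∈ ℝ^{l×l} and z̃ ∈ ℝ^l such that (R̃ + ΔR) z̃ = (Q̃ + ΔQ)ᵀ f, with ‖ΔR‖₂ ≤ γ‖R̃‖₂ and ‖ΔQ‖₂ ≤ δ‖Q̃‖₂. Then there exist ΔM ∈ ℝ^{l×l} and Δf ∈ ℝ^l such that (M + ΔM) z̃ = f + Δf, ‖ΔM‖₂ ≤ μ‖M‖₂ and ‖Δf‖₂ ≤ ν‖f‖₂, where μ = α + γ(1+α)√((1+β)/(1−β)) and ν = β + δ(1+β). -/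

import Mathlib

open scoped Matrix.Norms.L2Operator
open Matrix

-- real-number limit lemma
lemma aux_le_of_forall_pow_le {x C b : ℝ} (hx : 0 ≤ x) (hb : 0 ≤ b)
    (h : ∀ n : ℕ, x ^ 2 ^ n ≤ C * b ^ 2 ^ n) : x ≤ b := by
  by_contra hlt
  push_neg at hlt
  have hx0 : 0 < x := lt_of_le_of_lt hb hlt
  rcases eq_or_lt_of_le hb with hb0 | hb0
  · have h0 := h 0
    norm_num [← hb0] at h0
    nlinarith
  · have hr : 1 < x / b := (one_lt_div hb0).mpr hlt
    obtain ⟨n, hn⟩ := pow_unbounded_of_one_lt C hr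
    have h2 : (x / b) ^ n ≤ (x / b) ^ 2 ^ n :=
      pow_le_pow_right₀ hr.le (Nat.lt_two_pow_self (n := n)).le
    have h3 : (x / b) ^ 2 ^ n ≤ C := by
      rw [div_pow, div_le_iff₀ (by positivity)]
      exact h n
    linarith

lemma aux_norm_one_sub_self_mul_transpose {l : ℕ} (Q : Matrix (Fin l) (Fin l) ℝ) {β : ℝ}
    (hQd : IsUnit Q.det)
    (hβ : ‖(1 : Matrix (Fin l) (Fin l) ℝ) - Qᵀ * Q‖ ≤ β) (hβ1 : β < 1) :
    ‖(1 : Matrix (Fin l) (Fin l) ℝ) - Q * Qᵀ‖ ≤ β := by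
  set A : Matrix (Fin l) (Fin l) ℝ := 1 - Qᵀ * Q with hA
  set B : Matrix (Fin l) (Fin l) ℝ := 1 - Q * Qᵀ with hB
  have hQQi : Q * Q⁻¹ = 1 := Matrix.mul_nonsing_inv Q hQd
  have hQiQ : Q⁻¹ * Q = 1 := Matrix.nonsing_inv_mul Q hQd
  have hBA : B = Q * A * Q⁻¹ := by
    simp [hA, hB, mul_sub, sub_mul, mul_assoc, hQQi]
  have hpow : ∀ n : ℕ, B ^ n = Q * A ^ n * Q⁻¹ := by
    intro n
    induction n with
    | zero => simp [hQQi]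
    | succ n ih =>
        rw [pow_succ, ih, hBA, pow_succ]
        rw [mul_assoc (Q * A ^ n)]
        simp only [mul_assoc]
        rw [← mul_assoc Q⁻¹ Q, hQiQ, one_mul]
  have hsa : _root_.IsSelfAdjoint B := by
    simp [_root_.IsSelfAdjoint, hB, Matrix.star_eq_conjTranspose, conjTranspose_sub,
      conjTranspose_mul, conjTranspose_eq_transpose_of_trivial]
  have hβ0 : 0 ≤ β := le_trans (norm_nonneg _) hβ
  refine aux_le_of_forall_pow_le (norm_nonneg B) hβ0 (C := ‖Q‖ * ‖Q⁻¹‖) fun n => ?_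
  have e1 : ‖B‖ ^ 2 ^ n = ‖B ^ 2 ^ n‖ := by
    have h := hsa.nnnorm_pow_two_pow n
    rw [← coe_nnnorm B, ← coe_nnnorm (B ^ 2 ^ n), ← NNReal.coe_pow, h]
  rw [e1, hpow (2 ^ n)]
  calc ‖Q * A ^ 2 ^ n * Q⁻¹‖ ≤ ‖Q * A ^ 2 ^ n‖ * ‖Q⁻¹‖ := l2_opNorm_mul _ _
    _ ≤ ‖Q‖ * ‖A ^ 2 ^ n‖ * ‖Q⁻¹‖ :=
        mul_le_mul_of_nonneg_right (l2_opNorm_mul _ _) (norm_nonneg _)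
    _ ≤ ‖Q‖ * ‖A‖ ^ 2 ^ n * ‖Q⁻¹‖ := by
        refine mul_le_mul_of_nonneg_right (mul_le_mul_of_nonneg_left ?_ (norm_nonneg _))
          (norm_nonneg _)
        exact norm_pow_le' A (Nat.pow_pos (n := n) (by norm_num))
    _ ≤ ‖Q‖ * ‖Q⁻¹‖ * β ^ 2 ^ n := by
        have h4 : ‖A‖ ^ 2 ^ n ≤ β ^ 2 ^ n := pow_le_pow_left₀ (norm_nonneg _) hβ _
        calc ‖Q‖ * ‖A‖ ^ 2 ^ n * ‖Q⁻¹‖ ≤ ‖Q‖ * β ^ 2 ^ n * ‖Q⁻¹‖ :=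
              mul_le_mul_of_nonneg_right (mul_le_mul_of_nonneg_left h4 (norm_nonneg Q))
                (norm_nonneg Q⁻¹)
          _ = ‖Q‖ * ‖Q⁻¹‖ * β ^ 2 ^ n := by ring


set_option maxHeartbeats 1000000 in
/-- Theorem 1 of the paper: backward stability of the Q-R based solution of `M z = f`.
If `‖M - Q̃R̃‖₂ ≤ α ‖M‖₂` with `α κ(M) < 1`, `‖I - Q̃ᵀQ̃‖₂ ≤ β < 1`, and
`(R̃ + ΔR) z̃ = (Q̃ + ΔQ)ᵀ f` with `‖ΔR‖₂ ≤ γ ‖R̃‖₂`, `‖ΔQ‖₂ ≤ δ ‖Q̃‖₂`, then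
`(M + ΔM) z̃ = f + Δf` for some `ΔM`, `Δf` with `‖ΔM‖₂ ≤ μ ‖M‖₂`, `‖Δf‖₂ ≤ ν ‖f‖₂`,
where `μ = α + γ(1+α)√((1+β)/(1-β))` and `ν = β + δ(1+β)`. -/
theorem backward_stability {l : ℕ}
    (M Q R ΔR ΔQ : Matrix (Fin l) (Fin l) ℝ)
    (f z : EuclideanSpace ℝ (Fin l)) (α β γ δ : ℝ)
    (hM : IsUnit M.det)
    (hα : ‖M - Q * R‖ ≤ α * ‖M‖)
    (hκ : α * (‖M⁻¹‖ * ‖M‖) < 1)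
    (hβ : ‖(1 : Matrix (Fin l) (Fin l) ℝ) - Qᵀ * Q‖ ≤ β) (hβ1 : β < 1)
    (heq : (R + ΔR) *ᵥ z = (Q + ΔQ)ᵀ *ᵥ f)
    (hΔR : ‖ΔR‖ ≤ γ * ‖R‖) (hΔQ : ‖ΔQ‖ ≤ δ * ‖Q‖) :
    ∃ (ΔM : Matrix (Fin l) (Fin l) ℝ) (Δf : EuclideanSpace ℝ (Fin l)),
      (M + ΔM) *ᵥ z = f + Δf ∧
      ‖ΔM‖ ≤ (α + γ * (1 + α) * Real.sqrt ((1 + β) / (1 - β))) * ‖M‖ ∧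
      ‖Δf‖ ≤ (β + δ * (1 + β)) * ‖f‖ := by
  have hβ0 : 0 ≤ β := le_trans (norm_nonneg _) hβ
  rcases Nat.eq_zero_or_pos l with rfl | hl
  · refine ⟨0, 0, Subsingleton.elim _ _, ?_, ?_⟩
    · have hM0 : M = 0 := Subsingleton.elim _ _
      simp [hM0]
    · have hf0 : f = 0 := Subsingleton.elim _ _
      simp [hf0]
  haveI : NeZero l := ⟨hl.ne'⟩
  have hone : ‖(1 : Matrix (Fin l) (Fin l) ℝ)‖ = 1 := norm_one
  have hMn : 0 < ‖M‖ := by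
    rw [norm_pos_iff]
    rintro rfl
    simp at hM
  have hα0 : 0 ≤ α := by nlinarith [norm_nonneg (M - Q * R)]
  set A : Matrix (Fin l) (Fin l) ℝ := 1 - Qᵀ * Q with hAdef
  have hA1 : ‖A‖ < 1 := lt_of_le_of_lt hβ hβ1
  have hQtQ : IsUnit (Qᵀ * Q) := by
    have h := isUnit_one_sub_of_norm_lt_one hA1
    simpa [hAdef] using h
  have hQd : IsUnit Q.det := by
    have h := (Matrix.isUnit_iff_isUnit_det _).mp hQtQ
    rw [Matrix.det_mul, Matrix.det_transpose] at h
    exact isUnit_of_mul_isUnit_left h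
  have hQQi : Q * Q⁻¹ = 1 := Matrix.mul_nonsing_inv Q hQd
  have hQiQ : Q⁻¹ * Q = 1 := Matrix.nonsing_inv_mul Q hQd
  have hQn : 0 < ‖Q‖ := by
    rw [norm_pos_iff]
    rintro rfl
    simp at hQd
  have hδ0 : 0 ≤ δ := by by_contra hc; push_neg at hc; nlinarith [norm_nonneg ΔQ]
  have hQi0 : (0:ℝ) ≤ ‖Q⁻¹‖ := norm_nonneg _
  have hQsq : ‖Q‖ * ‖Q‖ ≤ 1 + β := by
    have h1 : ‖Qᵀ * Q‖ = ‖Q‖ * ‖Q‖ := by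
      rw [← conjTranspose_eq_transpose_of_trivial]
      exact l2_opNorm_conjTranspose_mul_self Q
    have h2 : Qᵀ * Q = 1 - A := by rw [hAdef, sub_sub_cancel]
    have h3 : ‖(1 : Matrix (Fin l) (Fin l) ℝ) - A‖ ≤ ‖(1 : Matrix (Fin l) (Fin l) ℝ)‖ + ‖A‖ :=
      norm_sub_le _ _
    rw [← h1, h2]
    rw [hone] at h3
    linarith
  have hQisq : ‖Q⁻¹‖ * ‖Q⁻¹‖ ≤ (1 - β)⁻¹ := by
    have h1 : Q⁻¹ * star Q⁻¹ = (Qᵀ * Q)⁻¹ := by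
      rw [Matrix.mul_inv_rev, Matrix.star_eq_conjTranspose,
        conjTranspose_eq_transpose_of_trivial, Matrix.transpose_nonsing_inv]
    have h2 : ‖Q⁻¹ * star Q⁻¹‖ = ‖Q⁻¹‖ * ‖Q⁻¹‖ := CStarRing.norm_self_mul_star
    have h3 : (Qᵀ * Q)⁻¹ = ∑' n : ℕ, A ^ n := by
      rw [Matrix.nonsing_inv_eq_ringInverse]
      have h : Qᵀ * Q = 1 - A := by rw [hAdef, sub_sub_cancel]
      rw [h, ← geom_series_eq_inverse A hA1]
    have h4 : ‖∑' n : ℕ, A ^ n‖ ≤ ‖(1 : Matrix (Fin l) (Fin l) ℝ)‖ - 1 + (1 - ‖A‖)⁻¹ :=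
      tsum_geometric_le_of_norm_lt_one A hA1
    rw [hone] at h4
    have h5 : (1 - ‖A‖)⁻¹ ≤ (1 - β)⁻¹ := inv_anti₀ (by linarith) (by linarith)
    rw [← h2, h1, h3]
    linarith
  have hs : ‖Q‖ * ‖Q⁻¹‖ ≤ Real.sqrt ((1 + β) / (1 - β)) := by
    apply Real.le_sqrt_of_sq_le
    rw [div_eq_mul_inv]
    nlinarith [mul_le_mul hQsq hQisq (mul_nonneg hQi0 hQi0) (by linarith : (0:ℝ) ≤ 1 + β)]
  have hγ0 : 0 ≤ γ := by
    rcases (norm_nonneg R).lt_or_eq with hR | hR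
    · by_contra hc; push_neg at hc; nlinarith [norm_nonneg ΔR]
    · exfalso
      have hR0 : R = 0 := norm_eq_zero.mp hR.symm
      rw [hR0, mul_zero, sub_zero] at hα
      have hκ1 : 1 ≤ ‖M⁻¹‖ * ‖M‖ := by
        have h := l2_opNorm_mul M⁻¹ M
        rw [Matrix.nonsing_inv_mul M hM, hone] at h
        exact h
      nlinarith
  have hQR : ‖Q * R‖ ≤ (1 + α) * ‖M‖ := by
    have h : ‖M - (M - Q * R)‖ ≤ ‖M‖ + ‖M - Q * R‖ := norm_sub_le _ _
    rw [sub_sub_cancel] at h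
    linarith
  have hRn : ‖R‖ ≤ ‖Q⁻¹‖ * ((1 + α) * ‖M‖) := by
    have h : R = Q⁻¹ * (Q * R) := by rw [← mul_assoc, hQiQ, one_mul]
    calc ‖R‖ = ‖Q⁻¹ * (Q * R)‖ := by rw [← h]
      _ ≤ ‖Q⁻¹‖ * ‖Q * R‖ := l2_opNorm_mul _ _
      _ ≤ ‖Q⁻¹‖ * ((1 + α) * ‖M‖) := mul_le_mul_of_nonneg_left hQR hQi0
  have hB : ‖(1 : Matrix (Fin l) (Fin l) ℝ) - Q * Qᵀ‖ ≤ β :=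
    aux_norm_one_sub_self_mul_transpose Q hQd hβ hβ1
  refine ⟨Q * ΔR - (M - Q * R), (EuclideanSpace.equiv (Fin l) ℝ).symm (((Q * Qᵀ - 1) + Q * ΔQᵀ) *ᵥ f), ?_, ?_, ?_⟩
  · have hMM : M + (Q * ΔR - (M - Q * R)) = Q * (R + ΔR) := by noncomm_ring
    have hQQ : Q * (Q + ΔQ)ᵀ = 1 + ((Q * Qᵀ - 1) + Q * ΔQᵀ) := by
      rw [transpose_add]; noncomm_ring
    rw [hMM, ← Matrix.mulVec_mulVec, heq, Matrix.mulVec_mulVec, hQQ, Matrix.add_mulVec,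
      Matrix.one_mulVec]
    rfl
  · have n1 : ‖Q * ΔR - (M - Q * R)‖ ≤ ‖Q * ΔR‖ + ‖M - Q * R‖ := norm_sub_le _ _
    have n2 : ‖Q * ΔR‖ ≤ ‖Q‖ * ‖ΔR‖ := l2_opNorm_mul _ _
    have k1 : ‖ΔR‖ ≤ γ * (‖Q⁻¹‖ * ((1 + α) * ‖M‖)) :=
      hΔR.trans (mul_le_mul_of_nonneg_left hRn hγ0)
    have k2 : ‖Q‖ * ‖ΔR‖ ≤ ‖Q‖ * (γ * (‖Q⁻¹‖ * ((1 + α) * ‖M‖))) :=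
      mul_le_mul_of_nonneg_left k1 hQn.le
    have k3 : ‖Q‖ * (γ * (‖Q⁻¹‖ * ((1 + α) * ‖M‖)))
        = (γ * ((1 + α) * ‖M‖)) * (‖Q‖ * ‖Q⁻¹‖) := by ring
    have k4 : (γ * ((1 + α) * ‖M‖)) * (‖Q‖ * ‖Q⁻¹‖)
        ≤ (γ * ((1 + α) * ‖M‖)) * Real.sqrt ((1 + β) / (1 - β)) :=
      mul_le_mul_of_nonneg_left hs (by positivity)
    linarith
  · have m2 : ‖(Q * Qᵀ - 1) + Q * ΔQᵀ‖ ≤ ‖Q * Qᵀ - 1‖ + ‖Q‖ * ‖ΔQᵀ‖ := by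
      have := norm_add_le (Q * Qᵀ - 1) (Q * ΔQᵀ)
      have h2 := l2_opNorm_mul Q ΔQᵀ
      linarith
    have m3 : ‖Q * Qᵀ - 1‖ = ‖(1 : Matrix (Fin l) (Fin l) ℝ) - Q * Qᵀ‖ := norm_sub_rev _ _
    have m4 : ‖ΔQᵀ‖ = ‖ΔQ‖ := by
      rw [← conjTranspose_eq_transpose_of_trivial]
      exact l2_opNorm_conjTranspose ΔQ
    have m5 : ‖(Q * Qᵀ - 1) + Q * ΔQᵀ‖ ≤ β + δ * (1 + β) := by
      rw [m3] at m2
      rw [m4] at m2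
      have w1 : ‖Q‖ * ‖ΔQ‖ ≤ ‖Q‖ * (δ * ‖Q‖) := mul_le_mul_of_nonneg_left hΔQ hQn.le
      have w2 : δ * (‖Q‖ * ‖Q‖) ≤ δ * (1 + β) := mul_le_mul_of_nonneg_left hQsq hδ0
      linarith
    exact le_trans (l2_opNorm_mulVec _ f)
      (le_trans (mul_le_mul_of_nonneg_right m5 (norm_nonneg f)) le_rfl)
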